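/- Let A, B ∈ M_{2n}(ℝ) be symmetric positive-definite matrices with AB = BA and (JA)(JB) = (JB)(JA). Then for every s ∈ ℝ, the matrices A^s and B^s satisfy (J A^s)(J B^s) = (J B^s)(J A^s). -/

import Mathlib

open Matrix

/-- The real power A^s of a real symmetric matrix, defined via its spectral
decomposition: A^s = U diag(λ_i ^ s) U*. -/
noncomputable def matRpow {m : Type*} [Fintype m] [DecidableEq m]
    (A : Matrix m m ℝ) (hA : A.IsHermitian) (s : ℝ) : Matrix m m ℝ :=
  (hA.eigenvectorUnitary : Matrix m m ℝ) *
    Matrix.diagonal (fun i => (hA.eigenvalues i) ^ s) *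
    star (hA.eigenvectorUnitary : Matrix m m ℝ)

section aux
variable {m : Type*} [Fintype m] [DecidableEq m]

lemma diag_transfer (f : ℝ → ℝ) {d e : m → ℝ} {W : Matrix m m ℝ}
    (h : W * Matrix.diagonal d = Matrix.diagonal e * W) :
    W * Matrix.diagonal (fun i => f (d i)) = Matrix.diagonal (fun i => f (e i)) * W := by
  ext i j
  have h' : (W * Matrix.diagonal d) i j = (Matrix.diagonal e * W) i j := by rw [h]
  simp only [Matrix.mul_diagonal, Matrix.diagonal_mul] at h' ⊢
  rcases eq_or_ne (W i j) 0 with hw | hw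
  · simp [hw]
  · have hde : d j = e i := mul_left_cancel₀ hw (h'.trans (mul_comm _ _))
    rw [hde, mul_comm]

lemma spectral_real {M : Matrix m m ℝ} (hM : M.IsHermitian) :
    M = (hM.eigenvectorUnitary : Matrix m m ℝ) * Matrix.diagonal hM.eigenvalues *
      star (hM.eigenvectorUnitary : Matrix m m ℝ) := by
  conv_lhs => rw [hM.spectral_theorem]
  simp [RCLike.ofReal_real_eq_id]

lemma hdiag_real {M : Matrix m m ℝ} (hM : M.IsHermitian) :
    star (hM.eigenvectorUnitary : Matrix m m ℝ) * M * (hM.eigenvectorUnitary : Matrix m m ℝ)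
      = Matrix.diagonal hM.eigenvalues := by
  have := hM.conjStarAlgAut_star_eigenvectorUnitary
  simpa [RCLike.ofReal_real_eq_id] using this


lemma unit_facts {M : Matrix m m ℝ} (hM : M.IsHermitian) :
    star (hM.eigenvectorUnitary : Matrix m m ℝ) * (hM.eigenvectorUnitary : Matrix m m ℝ) = 1 ∧
    (hM.eigenvectorUnitary : Matrix m m ℝ) * star (hM.eigenvectorUnitary : Matrix m m ℝ) = 1 := by
  constructor
  · exact Unitary.coe_star_mul_self hM.eigenvectorUnitary
  · exact Unitary.coe_mul_star_self hM.eigenvectorUnitary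

lemma commute_matRpow {M X : Matrix m m ℝ} (hM : M.IsHermitian) (s : ℝ)
    (h : X * M = M * X) : X * matRpow M hM s = matRpow M hM s * X := by
  obtain ⟨hU1, hU2⟩ := unit_facts hM
  set U := (hM.eigenvectorUnitary : Matrix m m ℝ) with hUdef
  have hc1 : ∀ Z : Matrix m m ℝ, U * (star U * Z) = Z := fun Z => by
    rw [← mul_assoc, hU2, one_mul]
  have hc2 : ∀ Z : Matrix m m ℝ, star U * (U * Z) = Z := fun Z => by
    rw [← mul_assoc, hU1, one_mul]
  have hdiag := hdiag_real hM
  set W := star U * X * U with hW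
  have hWd : W * Matrix.diagonal hM.eigenvalues = Matrix.diagonal hM.eigenvalues * W := by
    rw [← hdiag]
    simp only [hW, ← hUdef, mul_assoc, hc1, hc2]
    congr 1
    rw [← mul_assoc, h, mul_assoc]
  have hWs := diag_transfer (fun x => x ^ s) hWd
  have key : U * (W * Matrix.diagonal (fun i => hM.eigenvalues i ^ s)) * star U
      = U * (Matrix.diagonal (fun i => hM.eigenvalues i ^ s) * W) * star U := by rw [hWs]
  unfold matRpow
  calc X * (U * Matrix.diagonal (fun i => hM.eigenvalues i ^ s) * star U)
      = U * (W * Matrix.diagonal (fun i => hM.eigenvalues i ^ s)) * star U := by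
        simp only [hW, mul_assoc, hc1, hc2]
    _ = U * (Matrix.diagonal (fun i => hM.eigenvalues i ^ s) * W) * star U := key
    _ = U * Matrix.diagonal (fun i => hM.eigenvalues i ^ s) * star U * X := by
        simp only [hW, mul_assoc, hc1, hc2]
        rw [hU2, mul_one]


lemma posDef_conj {Q R : Matrix m m ℝ} (hQ : Q.PosDef) (hR : IsUnit R.det) :
    (Rᴴ * Q * R).PosDef := by
  have hRu : IsUnit R := (Matrix.isUnit_iff_isUnit_det R).mpr hR
  have hinj := Matrix.mulVec_injective_iff_isUnit.mpr hRu
  exact hQ.conjTranspose_mul_mul_same hinj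

lemma matRpow_posDef {M : Matrix m m ℝ} (hM : M.PosDef) (s : ℝ) :
    (matRpow M hM.isHermitian s).PosDef := by
  obtain ⟨hU1, hU2⟩ := unit_facts hM.isHermitian
  set U := (hM.isHermitian.eigenvectorUnitary : Matrix m m ℝ) with hUdef
  have hD : (Matrix.diagonal (fun i => hM.isHermitian.eigenvalues i ^ s)).PosDef :=
    Matrix.PosDef.diagonal fun i => Real.rpow_pos_of_pos (hM.eigenvalues_pos i) s
  have hdet : IsUnit (star U).det := by
    have := congrArg Matrix.det hU1
    rw [Matrix.det_mul, Matrix.det_one] at this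
    exact IsUnit.of_mul_eq_one _ this
  have := posDef_conj hD hdet
  rw [Matrix.star_eq_conjTranspose, Matrix.conjTranspose_conjTranspose] at this
  unfold matRpow
  rw [Matrix.star_eq_conjTranspose]
  exact this


lemma matRpow_zero {M : Matrix m m ℝ} (hM : M.IsHermitian) : matRpow M hM 0 = 1 := by
  obtain ⟨hU1, hU2⟩ := unit_facts hM
  unfold matRpow
  simp only [Real.rpow_zero]
  rw [show (fun _ : m => (1:ℝ)) = fun _ => 1 from rfl]
  rw [Matrix.diagonal_one, mul_one, hU2]

lemma matRpow_one {M : Matrix m m ℝ} (hM : M.IsHermitian) : matRpow M hM 1 = M := by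
  unfold matRpow
  simp only [Real.rpow_one]
  exact (spectral_real hM).symm

lemma matRpow_add {M : Matrix m m ℝ} (hM : M.PosDef) (s t : ℝ) :
    matRpow M hM.isHermitian s * matRpow M hM.isHermitian t
      = matRpow M hM.isHermitian (s + t) := by
  obtain ⟨hU1, hU2⟩ := unit_facts hM.isHermitian
  set U := (hM.isHermitian.eigenvectorUnitary : Matrix m m ℝ) with hUdef
  unfold matRpow
  have hc2 : ∀ Z : Matrix m m ℝ, star U * (U * Z) = Z := fun Z => by
    rw [← mul_assoc, hU1, one_mul]
  simp only [← hUdef, mul_assoc, hc2]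
  rw [← mul_assoc (Matrix.diagonal _) (Matrix.diagonal _), Matrix.diagonal_mul_diagonal]
  have he : (fun i => hM.isHermitian.eigenvalues i ^ s * hM.isHermitian.eigenvalues i ^ t)
      = fun i => hM.isHermitian.eigenvalues i ^ (s + t) :=
    funext fun i => (Real.rpow_add (hM.eigenvalues_pos i) s t).symm
  rw [he]

lemma matRpow_pow {M : Matrix m m ℝ} (hM : M.PosDef) (s : ℝ) (q : ℕ) :
    (matRpow M hM.isHermitian s) ^ q = matRpow M hM.isHermitian (q * s) := by
  induction q with
  | zero => simp only [pow_zero, Nat.cast_zero, zero_mul]; exact (matRpow_zero _).symm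
  | succ k ih =>
    rw [pow_succ, ih, matRpow_add hM]
    congr 1
    push_cast
    ring

lemma matRpow_natCast {M : Matrix m m ℝ} (hM : M.PosDef) (p : ℕ) :
    matRpow M hM.isHermitian (p : ℝ) = M ^ p := by
  have := matRpow_pow hM 1 p
  rw [matRpow_one, mul_one] at this
  exact this.symm

open scoped MatrixOrder in
lemma psd_eq_of_sq_eq_sq {P Q : Matrix m m ℝ} (hP : P.PosSemidef) (hQ : Q.PosSemidef)
    (h : P ^ 2 = Q ^ 2) : P = Q := by
  rw [← CFC.sqrt_sq P hP.nonneg, h, CFC.sqrt_sq Q hQ.nonneg]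

lemma eq_of_pow_two_pow_eq {P Q : Matrix m m ℝ} (hP : P.PosSemidef) (hQ : Q.PosSemidef)
    (k : ℕ) (h : P ^ (2 ^ k) = Q ^ (2 ^ k)) : P = Q := by
  induction k with
  | zero => simpa using h
  | succ k ih =>
    apply ih
    refine psd_eq_of_sq_eq_sq (hP.pow (2 ^ k)) (hQ.pow (2 ^ k)) ?_
    rw [← pow_mul, ← pow_mul, ← pow_succ]
    exact h

lemma posDef_mul_of_commute {P Q : Matrix m m ℝ} (hP : P.PosDef) (hQ : Q.PosDef)
    (h : P * Q = Q * P) : (P * Q).PosDef := by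
  set R := matRpow P hP.isHermitian (1/2) with hRdef
  have hR_pd : R.PosDef := matRpow_posDef hP (1/2)
  have hRR : R * R = P := by
    rw [hRdef, matRpow_add hP]
    norm_num
    exact matRpow_one _
  have hQR : Q * R = R * Q := commute_matRpow hP.isHermitian (1/2) h.symm
  have hRdet : IsUnit R.det := hR_pd.det_pos.ne'.isUnit
  have key : P * Q = Rᴴ * Q * R := by
    rw [hR_pd.isHermitian.eq]
    calc P * Q = R * R * Q := by rw [hRR]
      _ = R * (Q * R) := by rw [mul_assoc, ← hQR]
      _ = R * Q * R := by rw [mul_assoc]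
  rw [key]
  exact posDef_conj hQ hRdet


lemma matRpow_continuous {M : Matrix m m ℝ} (hM : M.PosDef) :
    Continuous fun s : ℝ => matRpow M hM.isHermitian s := by
  unfold matRpow
  refine Continuous.matrix_mul (Continuous.matrix_mul continuous_const ?_) continuous_const
  refine Continuous.matrix_diagonal (continuous_pi fun i => ?_)
  have hp := hM.eigenvalues_pos i
  have he : (fun s : ℝ => hM.isHermitian.eigenvalues i ^ s)
      = fun s => Real.exp (Real.log (hM.isHermitian.eigenvalues i) * s) :=
    funext fun s => Real.rpow_def_of_pos hp s
  rw [he]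
  exact Real.continuous_exp.comp (continuous_const.mul continuous_id)

lemma dense_dyadics :
    Dense {x : ℝ | ∃ p k : ℕ, x = (p : ℝ) / 2 ^ k ∨ x = -((p : ℝ) / 2 ^ k)} := by
  rw [dense_iff_exists_between]
  intro a b hab
  obtain ⟨k, hk⟩ := pow_unbounded_of_one_lt (b - a)⁻¹ (one_lt_two (α := ℝ))
  have h2k : (0 : ℝ) < 2 ^ k := by positivity
  set z : ℤ := ⌊a * 2 ^ k⌋ + 1 with hz
  have hza : a < (z : ℝ) / 2 ^ k := by
    rw [lt_div_iff₀ h2k, hz]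
    push_cast
    linarith [Int.lt_floor_add_one (a * 2 ^ k)]
  have hzb : (z : ℝ) / 2 ^ k < b := by
    rw [div_lt_iff₀ h2k, hz]
    have h1 : (⌊a * 2 ^ k⌋ : ℝ) ≤ a * 2 ^ k := Int.floor_le _
    have hba := sub_pos.mpr hab
    have h2 : (1 : ℝ) < (b - a) * 2 ^ k := by
      calc (1:ℝ) = (b - a) * (b - a)⁻¹ := (mul_inv_cancel₀ hba.ne').symm
        _ < (b - a) * 2 ^ k := by exact (mul_lt_mul_iff_right₀ hba).mpr hk
    push_cast
    nlinarith
  refine ⟨(z : ℝ) / 2 ^ k, ?_, hza, hzb⟩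
  rcases le_or_gt 0 z with h0 | h0
  · refine ⟨z.toNat, k, Or.inl ?_⟩
    congr 1
    exact_mod_cast (Int.toNat_of_nonneg h0).symm
  · refine ⟨(-z).toNat, k, Or.inr ?_⟩
    have hcast : (((-z).toNat : ℕ) : ℝ) = -(z : ℝ) := by
      exact_mod_cast Int.toNat_of_nonneg (by omega : (0:ℤ) ≤ -z)
    rw [hcast]
    ring

end aux


/-- If A, B are symmetric positive-definite with AB = BA and
(JA)(JB) = (JB)(JA), then for every s ∈ ℝ, (JA^s)(JB^s) = (JB^s)(JA^s). -/
theorem stmt19 (n : ℕ)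
    (A B : Matrix (Fin n ⊕ Fin n) (Fin n ⊕ Fin n) ℝ)
    (hA_symm : A.IsSymm) (hB_symm : B.IsSymm)
    (hA_pos : A.PosDef) (hB_pos : B.PosDef)
    (J : Matrix (Fin n ⊕ Fin n) (Fin n ⊕ Fin n) ℝ)
    (hJ : J = Matrix.fromBlocks 0 1 (-1) 0)
    (hcomm : A * B = B * A)
    (hJcomm : (J * A) * (J * B) = (J * B) * (J * A)) :
    ∀ s : ℝ,
      (J * matRpow A hA_pos.isHermitian s) * (J * matRpow B hB_pos.isHermitian s)
        = (J * matRpow B hB_pos.isHermitian s) * (J * matRpow A hA_pos.isHermitian s) := by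
  have hA := hA_pos.isHermitian
  have hB := hB_pos.isHermitian
  -- J * J = -1
  have hJJ : J * J = -1 := by
    subst hJ
    rw [Matrix.fromBlocks_multiply]
    simp only [Matrix.mul_zero, Matrix.zero_mul, Matrix.mul_one, Matrix.one_mul,
      Matrix.neg_mul, Matrix.mul_neg, add_zero, zero_add, neg_zero]
    rw [show (-1 : Matrix ((Fin n) ⊕ (Fin n)) ((Fin n) ⊕ (Fin n)) ℝ)
        = -(Matrix.fromBlocks 1 0 0 1) from by rw [Matrix.fromBlocks_one]]
    rw [Matrix.fromBlocks_neg]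
    simp
  -- A*J*B = B*J*A
  have hAJB : A * J * B = B * J * A := by
    have h2 := congrArg (fun M => J * M) hJcomm
    simp only [← mul_assoc] at h2
    rw [hJJ] at h2
    simp only [neg_one_mul, Matrix.neg_mul, neg_inj] at h2
    exact h2
  -- inverse facts for B
  have hdetB : IsUnit B.det := hB_pos.det_pos.ne'.isUnit
  have hBB : B * B⁻¹ = 1 := Matrix.mul_nonsing_inv _ hdetB
  have hB'B : B⁻¹ * B = 1 := Matrix.nonsing_inv_mul _ hdetB
  have hBinvA : B⁻¹ * A = A * B⁻¹ := by
    have h3 : B⁻¹ * (A * B) * B⁻¹ = B⁻¹ * (B * A) * B⁻¹ := by rw [hcomm]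
    calc B⁻¹ * A = B⁻¹ * A * (B * B⁻¹) := by rw [hBB, mul_one]
      _ = B⁻¹ * (A * B) * B⁻¹ := by simp only [mul_assoc]
      _ = B⁻¹ * (B * A) * B⁻¹ := h3
      _ = (B⁻¹ * B) * (A * B⁻¹) := by simp only [mul_assoc]
      _ = A * B⁻¹ := by rw [hB'B, one_mul]
  set C := A * B⁻¹ with hCdef
  have hC_pd : C.PosDef := posDef_mul_of_commute hA_pos hB_pos.inv hBinvA.symm
  have hCBA : C * B = A := by rw [hCdef, mul_assoc, hB'B, mul_one]
  have hBCA : B * C = A := by rw [hCdef, ← mul_assoc, ← hcomm, mul_assoc, hBB, mul_one]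
  have hCB : C * B = B * C := by rw [hCBA, hBCA]
  have hJC : J * C = C * J := by
    have e1 : J * C = B⁻¹ * (B * J * A) * B⁻¹ := by
      calc J * C = (B⁻¹ * B) * (J * (A * B⁻¹)) := by rw [hB'B, one_mul]
        _ = B⁻¹ * (B * J * A) * B⁻¹ := by simp only [mul_assoc]
    have e2 : C * J = B⁻¹ * (A * J * B) * B⁻¹ := by
      calc C * J = (B⁻¹ * A) * J := by rw [← hBinvA]
        _ = B⁻¹ * A * (J * (B * B⁻¹)) := by rw [hBB, mul_one]
        _ = B⁻¹ * (A * J * B) * B⁻¹ := by simp only [mul_assoc]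
    rw [e1, e2, hAJB]
  -- nonnegative dyadic exponents
  have hdy : ∀ (p k : ℕ),
      matRpow A hA_pos.isHermitian ((p:ℝ)/2^k) * J * matRpow B hB_pos.isHermitian ((p:ℝ)/2^k)
        = matRpow B hB_pos.isHermitian ((p:ℝ)/2^k) * J
            * matRpow A hA_pos.isHermitian ((p:ℝ)/2^k) := by
    intro p k
    set s : ℝ := (p:ℝ)/2^k with hs
    have hqs : ((2^k : ℕ) : ℝ) * s = (p : ℝ) := by
      rw [hs]
      push_cast
      field_simp
    set X := matRpow C hC_pd.isHermitian s with hX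
    set As := matRpow A hA_pos.isHermitian s with hAs
    set Bs := matRpow B hB_pos.isHermitian s with hBs
    have hX_pd : X.PosDef := matRpow_posDef hC_pd s
    have hBs_pd : Bs.PosDef := matRpow_posDef hB_pos s
    have hAs_pd : As.PosDef := matRpow_posDef hA_pos s
    have hJX : J * X = X * J := commute_matRpow hC_pd.isHermitian s hJC
    have hBX : B * X = X * B := commute_matRpow hC_pd.isHermitian s hCB.symm
    have hXBs : X * Bs = Bs * X := commute_matRpow hB_pos.isHermitian s hBX.symm
    have hP_pd : (X * Bs).PosDef := posDef_mul_of_commute hX_pd hBs_pd hXBs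
    have hpow : (X * Bs) ^ (2^k) = As ^ (2^k) := by
      rw [Commute.mul_pow hXBs (2^k)]
      rw [hX, hBs, hAs, matRpow_pow hC_pd, matRpow_pow hB_pos, matRpow_pow hA_pos, hqs,
        matRpow_natCast hC_pd, matRpow_natCast hB_pos, matRpow_natCast hA_pos,
        ← Commute.mul_pow hCB, hCBA]
    have hXBsAs : X * Bs = As := eq_of_pow_two_pow_eq hP_pd.posSemidef hAs_pd.posSemidef k hpow
    calc As * J * Bs = X * Bs * J * Bs := by rw [hXBsAs]
      _ = Bs * X * J * Bs := by rw [hXBs]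
      _ = Bs * (X * J) * Bs := by simp only [mul_assoc]
      _ = Bs * (J * X) * Bs := by rw [hJX]
      _ = Bs * J * (X * Bs) := by simp only [mul_assoc]
      _ = Bs * J * As := by rw [hXBsAs]
  -- closure under negation
  have hJinv : J⁻¹ = -J := Matrix.inv_eq_right_inv (by rw [Matrix.mul_neg, hJJ, neg_neg])
  have hneg : ∀ s : ℝ,
      matRpow A hA_pos.isHermitian s * J * matRpow B hB_pos.isHermitian s
        = matRpow B hB_pos.isHermitian s * J * matRpow A hA_pos.isHermitian s →
      matRpow A hA_pos.isHermitian (-s) * J * matRpow B hB_pos.isHermitian (-s)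
        = matRpow B hB_pos.isHermitian (-s) * J * matRpow A hA_pos.isHermitian (-s) := by
    intro s h
    have hAinv : (matRpow A hA_pos.isHermitian s)⁻¹ = matRpow A hA_pos.isHermitian (-s) :=
      Matrix.inv_eq_right_inv (by rw [matRpow_add hA_pos, add_neg_cancel, matRpow_zero])
    have hBinv : (matRpow B hB_pos.isHermitian s)⁻¹ = matRpow B hB_pos.isHermitian (-s) :=
      Matrix.inv_eq_right_inv (by rw [matRpow_add hB_pos, add_neg_cancel, matRpow_zero])
    have h7 := congrArg (fun M => M⁻¹) h
    simp only [Matrix.mul_inv_rev, hAinv, hBinv, hJinv] at h7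
    simp only [Matrix.mul_neg, Matrix.neg_mul, neg_inj] at h7
    rw [← mul_assoc, ← mul_assoc] at h7
    exact h7.symm
  -- extend to all reals by continuity
  have hfun : (fun s : ℝ =>
        matRpow A hA_pos.isHermitian s * J * matRpow B hB_pos.isHermitian s)
      = fun s : ℝ =>
        matRpow B hB_pos.isHermitian s * J * matRpow A hA_pos.isHermitian s := by
    apply Continuous.ext_on dense_dyadics
    · exact ((matRpow_continuous hA_pos).matrix_mul continuous_const).matrix_mul
        (matRpow_continuous hB_pos)
    · exact ((matRpow_continuous hB_pos).matrix_mul continuous_const).matrix_mul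
        (matRpow_continuous hA_pos)
    · rintro x ⟨p, k, h | h⟩
      · subst h
        exact hdy p k
      · subst h
        exact hneg _ (hdy p k)
  intro s
  have key := congrFun hfun s
  have h8 : matRpow A hA_pos.isHermitian s * (J * matRpow B hB_pos.isHermitian s)
      = matRpow B hB_pos.isHermitian s * (J * matRpow A hA_pos.isHermitian s) := by
    rw [← mul_assoc, ← mul_assoc]
    exact key
  calc J * matRpow A hA_pos.isHermitian s * (J * matRpow B hB_pos.isHermitian s)
      = J * (matRpow A hA_pos.isHermitian s * (J * matRpow B hB_pos.isHermitian s)) := by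
        rw [mul_assoc]
    _ = J * (matRpow B hB_pos.isHermitian s * (J * matRpow A hA_pos.isHermitian s)) := by
        rw [h8]
    _ = J * matRpow B hB_pos.isHermitian s * (J * matRpow A hA_pos.isHermitian s) := by
        rw [mul_assoc]
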